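/- arXiv:1512.00057 — 3 statements merged into one kernel-verified Lean document; each statement's English description precedes it below -/
import Mathlib

section
/- Let m > 0 be even, l = m/2, and ψ_{l,m}(ζ,ω) = sqrt((m+1)!/(l!(m-l)!)) ζ^l ω^l. For {z,w} ∈ SU(2), the projection of {z,w}.ψ_{l,m} onto the line ℂ·ψ_{l,m} equals p_l(|z|,|w|)·ψ_{l,m}, where p_l(|z|,|w|) = Σ_{i=0}^{l} (-1)^i (binom(l,i))² |z|^{2(l-i)} |w|^{2i}. -/
/-- The matrix coefficient `π_m^{j,p}` of the degree-`m` irreducible representation of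
SU(2), as a function of the point `(ζ,ω) ∈ S³ ⊂ ℂ²` identified with the group element
whose first column is `(ζ,ω)`:  `π_m^{j,p}(S) = ⟨S.ψ_{j,m}, ψ_{p,m}⟩` is the coefficient
of `ψ_{p,m}` in the expansion of `S.ψ_{j,m}` (where `(S.φ)(v) = φ(S* v)`). -/
noncomputable def cpi (m j p : ℕ) (ζ ω : ℂ) : ℂ :=
  ((Real.sqrt (((m + 1).factorial / (j.factorial * (m - j).factorial) : ℕ)) /
      Real.sqrt (((m + 1).factorial / (p.factorial * (m - p).factorial) : ℕ)) : ℝ) : ℂ) *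
    MvPolynomial.coeff (Finsupp.single (0 : Fin 2) p + Finsupp.single (1 : Fin 2) (m - p))
      ((MvPolynomial.C ((starRingEnd ℂ) ζ) * MvPolynomial.X 0
          + MvPolynomial.C ((starRingEnd ℂ) ω) * MvPolynomial.X 1) ^ j *
        (MvPolynomial.C (-ω) * MvPolynomial.X 0 + MvPolynomial.C ζ * MvPolynomial.X 1) ^ (m - j))

open MvPolynomial Finset

lemma finsupp_pair_eq (p q r s : ℕ) :
    (Finsupp.single (0:Fin 2) p + Finsupp.single 1 q = Finsupp.single 0 r + Finsupp.single 1 s)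
      ↔ (p = r ∧ q = s) := by
  constructor
  · intro h
    constructor
    · have := DFunLike.congr_fun h 0
      simpa [Finsupp.single_apply] using this
    · have := DFunLike.congr_fun h 1
      simpa [Finsupp.single_apply] using this
  · rintro ⟨rfl, rfl⟩; rfl

lemma expand_pow (l : ℕ) (a b : ℂ) :
    (C a * X (0:Fin 2) + C b * X 1) ^ l =
      ∑ k ∈ range (l+1), monomial (Finsupp.single 0 k + Finsupp.single 1 (l-k))
        (a ^ k * b ^ (l-k) * (l.choose k : ℂ)) := by
  rw [add_pow]
  refine Finset.sum_congr rfl fun k hk => ?_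
  rw [mul_pow, mul_pow, ← C_pow, ← C_pow, X_pow_eq_monomial, X_pow_eq_monomial,
    C_mul_monomial, C_mul_monomial, mul_one, mul_one, monomial_mul,
    (C_eq_coe_nat (l.choose k)).symm,
    mul_comm _ (C _), C_mul_monomial]
  ring_nf

lemma coeff_prod_binom (l : ℕ) (a b c d : ℂ) :
    MvPolynomial.coeff (Finsupp.single (0:Fin 2) l + Finsupp.single 1 l)
      ((C a * X 0 + C b * X 1) ^ l * (C c * X 0 + C d * X 1) ^ l) =
      ∑ k ∈ range (l+1), a ^ k * b ^ (l-k) * c ^ (l-k) * d ^ k * (l.choose k : ℂ)^2 := by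
  rw [expand_pow, expand_pow, Finset.sum_mul_sum]
  simp only [monomial_mul, MvPolynomial.coeff_sum, coeff_monomial]
  refine Finset.sum_congr rfl fun k1 hk1 => ?_
  rw [Finset.mem_range] at hk1
  rw [Finset.sum_eq_single_of_mem (l - k1) (by rw [Finset.mem_range]; omega)]
  · rw [if_pos, Nat.sub_sub_self (by omega), Nat.choose_symm (by omega : k1 ≤ l)]
    · ring
    · rw [add_add_add_comm, ← Finsupp.single_add, ← Finsupp.single_add, finsupp_pair_eq]; omega
  · intro b2 hb2 hne
    rw [Finset.mem_range] at hb2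
    rw [if_neg]
    rw [add_add_add_comm, ← Finsupp.single_add, ← Finsupp.single_add, finsupp_pair_eq]
    omega

/-- for `m = 2l > 0` even, the projection of `{z,w}.ψ_{l,m}` onto
`ℂ·ψ_{l,m}`, i.e. the matrix coefficient `⟨{z,w}.ψ_{l,m}, ψ_{l,m}⟩`, equals
`p_l(|z|,|w|) = Σ_{i=0}^{l} (-1)^i binom(l,i)² |z|^{2(l-i)} |w|^{2i}`. -/
theorem stmt_6 (l : ℕ) (hl : 1 ≤ l) (z w : ℂ)
    (h : ‖z‖ ^ 2 + ‖w‖ ^ 2 = 1) :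
    cpi (2 * l) l l z w =
      ((∑ i ∈ Finset.range (l + 1), (-1 : ℝ) ^ i * (l.choose i : ℝ) ^ 2 *
          ‖z‖ ^ (2 * (l - i)) * ‖w‖ ^ (2 * i) : ℝ) : ℂ) := by
  have e : 2 * l - l = l := by omega
  have hNpos : 0 < (2 * l + 1).factorial / (l.factorial * l.factorial) := by
    apply Nat.div_pos
    · calc l.factorial * l.factorial ≤ (2*l).choose l * (l.factorial * l.factorial) :=
            Nat.le_mul_of_pos_left _ (Nat.choose_pos (by omega))
        _ = (2*l).factorial := by
            rw [← Nat.choose_mul_factorial_mul_factorial (show l ≤ 2*l by omega), e, mul_assoc]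
        _ ≤ (2*l+1).factorial := Nat.factorial_le (by omega)
    · positivity
  have hs : Real.sqrt ((2 * l + 1).factorial / (l.factorial * l.factorial) : ℕ) ≠ 0 := by
    refine ne_of_gt (Real.sqrt_pos.mpr ?_)
    exact_mod_cast hNpos
  rw [cpi, e, div_self hs, Complex.ofReal_one, one_mul, coeff_prod_binom]
  rw [← Finset.sum_range_reflect, Complex.ofReal_sum]
  refine Finset.sum_congr rfl fun i hi => ?_
  rw [Finset.mem_range] at hi
  have hi' : i ≤ l := by omega
  have h1 : l + 1 - 1 - i = l - i := by omega
  have h2 : l - (l - i) = i := by omega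
  have h3 : l.choose (l - i) = l.choose i := Nat.choose_symm hi'
  have hz : (starRingEnd ℂ) z * z = ((‖z‖ : ℝ) : ℂ) ^ 2 := by
    rw [mul_comm, Complex.mul_conj, Complex.normSq_eq_norm_sq]
    push_cast
    ring
  have hw : (starRingEnd ℂ) w * w = ((‖w‖ : ℝ) : ℂ) ^ 2 := by
    rw [mul_comm, Complex.mul_conj, Complex.normSq_eq_norm_sq]
    push_cast
    ring
  rw [h1, h2, h3]
  calc (starRingEnd ℂ) z ^ (l - i) * (starRingEnd ℂ) w ^ i * (-w) ^ i * z ^ (l - i) *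
        ((l.choose i : ℂ)) ^ 2
      = ((starRingEnd ℂ) z * z) ^ (l - i) * ((starRingEnd ℂ) w * w) ^ i * (-1 : ℂ) ^ i *
        ((l.choose i : ℂ)) ^ 2 := by
        rw [neg_pow]; ring
    _ = (((-1 : ℝ) ^ i * (l.choose i : ℝ) ^ 2 *
          ‖z‖ ^ (2 * (l - i)) * ‖w‖ ^ (2 * i) : ℝ) : ℂ) := by
        rw [hz, hw, ← pow_mul, ← pow_mul]
        push_cast
        ring
end

section
/- With l ≥ 1 and p_l(x) = Σ_{i=0}^{l} (-1)^i (binom(l,i))² x^{l-i} (1-x)^i for x ∈ [0,1] (the projection factor with x = |z|²), one has |p_l(x)| ≤ 1 for all x ∈ [0,1], p_l(1) = 1, p_l(0) = (-1)^l, and |p_l(x)| < 1 for x ∈ (0,1). -/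
open Finset

lemma sum_root_pow (N : ℕ) (hN : 0 < N) (k : ℕ) :
    ∑ m ∈ Finset.range N, (Complex.exp (2 * Real.pi * Complex.I / N)) ^ (m * k) =
      if N ∣ k then (N : ℂ) else 0 := by
  have hprim : IsPrimitiveRoot (Complex.exp (2 * Real.pi * Complex.I / N)) N :=
    Complex.isPrimitiveRoot_exp N hN.ne'
  set ζ := Complex.exp (2 * Real.pi * Complex.I / N) with hζ
  have h1 : ∀ m : ℕ, ζ ^ (m * k) = (ζ ^ k) ^ m := fun m => by
    rw [← pow_mul, Nat.mul_comm]
  simp_rw [h1]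
  by_cases hdvd : N ∣ k
  · simp [hdvd, (hprim.pow_eq_one_iff_dvd k).mpr hdvd]
  · rw [if_neg hdvd]
    have hne : ζ ^ k ≠ 1 := fun h => hdvd ((hprim.pow_eq_one_iff_dvd k).mp h)
    rw [geom_sum_eq hne]
    rw [← pow_mul, mul_comm k N, pow_mul, hprim.pow_eq_one, one_pow]
    simp

lemma dvd_iff_eq (l i j : ℕ) (hi : i ≤ l) (hj : j ≤ l) :
    (2*l+1) ∣ (i + j + l*(2*l)) ↔ i + j = l := by
  constructor
  · rintro ⟨k, hk⟩
    have h1 : k ≤ l := by nlinarith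
    have h2 : l ≤ k := by nlinarith
    have : k = l := le_antisymm h1 h2
    subst this
    nlinarith
  · intro h
    exact ⟨l, by rw [h]; ring⟩

lemma pl_lt (l : ℕ) (hl : 1 ≤ l) (x : ℝ) (hx0 : 0 < x) (hx1 : x < 1) :
    |∑ i ∈ Finset.range (l + 1),
        (-1 : ℝ) ^ i * (l.choose i : ℝ) ^ 2 * x ^ (l - i) * (1 - x) ^ i| < 1 := by
  set N : ℕ := 2*l+1 with hN
  have hNpos : 0 < N := by omega
  set ζ : ℂ := Complex.exp (2 * Real.pi * Complex.I / N) with hζ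
  set r : ℝ := Real.sqrt ((1-x)/x) with hrdef
  have hb : 0 < 1 - x := by linarith
  have hr0 : 0 < r := Real.sqrt_pos.mpr (by positivity)
  have hr2 : x * r^2 = 1 - x := by
    rw [hrdef, Real.sq_sqrt (by positivity)]
    field_simp
  have hζm : ∀ m : ℕ, ζ ^ m = Complex.exp (((2 * Real.pi * m / N : ℝ) : ℂ) * Complex.I) := by
    intro m
    rw [hζ, ← Complex.exp_nat_mul]
    congr 1
    have hNne : (N:ℂ) ≠ 0 := Nat.cast_ne_zero.mpr (by omega)
    push_cast
    field_simp
  have habs : ∀ m : ℕ, ‖ζ ^ m‖ = 1 := by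
    intro m; rw [hζm m, Complex.norm_exp_ofReal_mul_I]
  have hre : ∀ m : ℕ, (ζ ^ m).re = Real.cos (2 * Real.pi * m / N) := by
    intro m; rw [hζm m, Complex.exp_ofReal_mul_I_re]
  have him : ∀ m : ℕ, (ζ ^ m).im = Real.sin (2 * Real.pi * m / N) := by
    intro m; rw [hζm m, Complex.exp_ofReal_mul_I_im]
  have hcs : ∀ m : ℕ, ((ζ^m).re)^2 + ((ζ^m).im)^2 = 1 := by
    intro m
    rw [hre, him]
    rw [← Real.sin_sq_add_cos_sq (2 * Real.pi * m / N)]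
    ring
  have hcne : ∀ m : ℕ, (ζ ^ m).re ≠ 0 := by
    intro m
    rw [hre]
    intro h
    rw [Real.cos_eq_zero_iff] at h
    obtain ⟨k, hk⟩ := h
    have h4 : (4 * m : ℝ) = (2 * k + 1) * N := by
      have hNpos' : (0:ℝ) < N := by positivity
      field_simp at hk
      nlinarith [hk, Real.pi_pos]
    have h4' : (4 * m : ℤ) = (2 * k + 1) * N := by exact_mod_cast h4
    have hodd : Odd ((2 * k + 1) * (N:ℤ)) := by
      refine (odd_two_mul_add_one k).mul ?_
      have : (N:ℤ) = 2*(l:ℤ)+1 := by rw [hN]; push_cast; ring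
      rw [this]; exact odd_two_mul_add_one (l:ℤ)
    rw [← h4'] at hodd
    exact ((Int.not_odd_iff_even.mpr ⟨2*m, by ring⟩)) hodd
  set F : ℕ → ℂ := fun m =>
    ((x:ℂ) * ((r:ℂ) * ζ ^ m) - ((1 - x : ℝ):ℂ)) ^ l * (1 + (r:ℂ) * ζ ^ m) ^ l
      * ζ ^ (m * (l * (2*l))) with hF
  -- Claim B : strict bound on each term
  have claimB : ∀ m : ℕ, ‖F m‖ < r ^ l := by
    intro m
    set c : ℝ := (ζ ^ m).re with hcdef
    set s : ℝ := (ζ ^ m).im with hsdef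
    have hc : c ≠ 0 := hcne m
    have hc2 : 0 < c ^ 2 := by
      rcases (sq_nonneg c).lt_or_eq with h | h
      · exact h
      · exact absurd (pow_eq_zero_iff (two_ne_zero)).mp (by rw [← h] at *; simp_all)
    have hcs' : c^2 + s^2 = 1 := hcs m
    have key : (‖(x:ℂ) * ((r:ℂ) * ζ ^ m) - ((1 - x : ℝ):ℂ)‖)^2
        * (‖1 + (r:ℂ) * ζ ^ m‖)^2 = r^2 * (1 - 4*x*(1-x)*c^2) := by
      rw [Complex.sq_norm, Complex.sq_norm, Complex.normSq_apply, Complex.normSq_apply]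
      simp only [Complex.sub_re, Complex.sub_im, Complex.add_re, Complex.add_im,
        Complex.mul_re, Complex.mul_im, Complex.ofReal_re, Complex.ofReal_im,
        Complex.one_re, Complex.one_im, ← hcdef, ← hsdef]
      linear_combination
        (r^2 * (x*(1-x)*(1 + r^2 - 2*r*c)) + x^2*r^2*((1+r*c)^2 + (r*s)^2)) * hcs'
        + ((x - (1-x))*((1+r*c)^2 + (r*s)^2) + ((1-x)*r^2 - x)) * hr2
    have hlt : ‖(x:ℂ) * ((r:ℂ) * ζ ^ m) - ((1 - x : ℝ):ℂ)‖
        * ‖1 + (r:ℂ) * ζ ^ m‖ < r := by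
      nlinarith [key, mul_pos (mul_pos (mul_pos (by norm_num : (0:ℝ) < 4) hx0) hb) hc2,
        norm_nonneg ((x:ℂ) * ((r:ℂ) * ζ ^ m) - ((1 - x : ℝ):ℂ)),
        norm_nonneg (1 + (r:ℂ) * ζ ^ m), hr0, pow_pos hr0 2]
    have hFabs : ‖F m‖
        = (‖(x:ℂ) * ((r:ℂ) * ζ ^ m) - ((1 - x : ℝ):ℂ)‖
            * ‖1 + (r:ℂ) * ζ ^ m‖) ^ l := by
      rw [hF]
      simp only [norm_mul, norm_pow, habs, one_pow, mul_one, mul_pow]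
    rw [hFabs]
    exact pow_lt_pow_left₀ hlt (by positivity) (by omega)
  -- Claim A : the sum identity
  have expand : ∀ m : ℕ, F m =
      ∑ i ∈ range (l+1), ∑ j ∈ range (l+1),
        ((x:ℂ)^i * (-((1 - x : ℝ):ℂ))^(l-i) * (r:ℂ)^(i+j) * (l.choose i) * (l.choose j))
          * ζ ^ (m * (i + j + l*(2*l))) := by
    intro m
    simp only [hF]
    have e1 : ((x:ℂ) * ((r:ℂ) * ζ ^ m) - ((1 - x : ℝ):ℂ)) ^ l
        = ∑ i ∈ range (l+1), ((x:ℂ) * ((r:ℂ) * ζ ^ m))^i * (-((1 - x : ℝ):ℂ))^(l-i)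
            * (l.choose i) := by
      rw [sub_eq_add_neg, add_pow]
    have e2 : (1 + (r:ℂ) * ζ ^ m) ^ l
        = ∑ j ∈ range (l+1), ((r:ℂ) * ζ ^ m)^j * (l.choose j) := by
      rw [add_comm, add_pow]
      exact Finset.sum_congr rfl fun j hj => by rw [one_pow, mul_one]
    rw [e1, e2, Finset.sum_mul_sum, Finset.sum_mul]
    refine Finset.sum_congr rfl fun i hi => ?_
    rw [Finset.sum_mul]
    refine Finset.sum_congr rfl fun j hj => ?_
    ring
  have claimA : ∑ m ∈ range N, F m
      = (N:ℂ) * (r:ℂ)^l *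
        ∑ i ∈ range (l+1), ((l.choose i:ℂ))^2 * (x:ℂ)^i * (-((1 - x : ℝ):ℂ))^(l-i) := by
    simp_rw [expand]
    rw [Finset.sum_comm]
    have swap2 : ∀ i ∈ range (l+1),
        (∑ m ∈ range N, ∑ j ∈ range (l+1),
          ((x:ℂ)^i * (-((1 - x : ℝ):ℂ))^(l-i) * (r:ℂ)^(i+j) * (l.choose i) * (l.choose j))
            * ζ ^ (m * (i + j + l*(2*l))))
        = ((l.choose i:ℂ))^2 * (x:ℂ)^i * (-((1 - x : ℝ):ℂ))^(l-i) * ((N:ℂ) * (r:ℂ)^l) := by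
      intro i hi
      have hi' : i ≤ l := Finset.mem_range_succ_iff.mp hi
      rw [Finset.sum_comm]
      have inner : ∀ j ∈ range (l+1),
          (∑ m ∈ range N,
            ((x:ℂ)^i * (-((1 - x : ℝ):ℂ))^(l-i) * (r:ℂ)^(i+j) * (l.choose i) * (l.choose j))
              * ζ ^ (m * (i + j + l*(2*l))))
          = ((x:ℂ)^i * (-((1 - x : ℝ):ℂ))^(l-i) * (r:ℂ)^(i+j) * (l.choose i) * (l.choose j))
              * (if i + j = l then (N:ℂ) else 0) := by
        intro j hj
        have hj' : j ≤ l := Finset.mem_range_succ_iff.mp hj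
        rw [← Finset.mul_sum, hζ, sum_root_pow N hNpos]
        congr 1
        simp only [hN, dvd_iff_eq l i j hi' hj']
      rw [Finset.sum_congr rfl inner]
      rw [Finset.sum_eq_single (l - i)
        (fun j hj hne => by rw [if_neg (fun hij => hne (by omega)), mul_zero])
        (fun h => absurd (Finset.mem_range_succ_iff.mpr (by omega)) h)]
      rw [if_pos (by omega)]
      have h1 : i + (l - i) = l := by omega
      rw [h1, Nat.choose_symm hi']
      ring
    rw [Finset.sum_congr rfl swap2, ← Finset.sum_mul]
    ring
  -- relate the real sum to the complex sum
  have hSc : ((∑ i ∈ Finset.range (l + 1),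
        (-1 : ℝ) ^ i * (l.choose i : ℝ) ^ 2 * x ^ (l - i) * (1 - x) ^ i : ℝ) : ℂ)
      = ∑ i ∈ range (l+1), ((l.choose i:ℂ))^2 * (x:ℂ)^i * (-((1 - x : ℝ):ℂ))^(l-i) := by
    push_cast
    conv_rhs => rw [← Finset.sum_range_reflect]
    refine Finset.sum_congr rfl fun i hi => ?_
    have hi' : i ≤ l := Finset.mem_range_succ_iff.mp hi
    have h1 : l + 1 - 1 - i = l - i := by omega
    rw [h1, Nat.sub_sub_self hi', Nat.choose_symm hi',
      neg_pow (1 - (x:ℂ))]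
    ring
  set S : ℝ := ∑ i ∈ Finset.range (l + 1),
      (-1 : ℝ) ^ i * (l.choose i : ℝ) ^ 2 * x ^ (l - i) * (1 - x) ^ i with hSdef
  have habsS : ‖∑ m ∈ range N, F m‖ = N * r^l * |S| := by
    rw [claimA, ← hSc]
    rw [norm_mul, norm_mul, norm_pow, Complex.norm_natCast, Complex.norm_real,
      Complex.norm_real, Real.norm_eq_abs, Real.norm_eq_abs, abs_of_pos hr0]
  have hsum_lt : ‖∑ m ∈ range N, F m‖ < N * r^l := by
    calc ‖∑ m ∈ range N, F m‖ ≤ ∑ m ∈ range N, ‖F m‖ :=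
          norm_sum_le _ _
      _ < ∑ m ∈ range N, r^l := by
          refine Finset.sum_lt_sum_of_nonempty ?_ (fun m _ => claimB m)
          exact Finset.nonempty_range_iff.mpr (by omega)
      _ = N * r^l := by rw [Finset.sum_const, Finset.card_range, nsmul_eq_mul]
  have hpos : (0:ℝ) < N * r^l := by positivity
  nlinarith [habsS, hsum_lt, hpos, abs_nonneg S]

/-- for `l ≥ 1` and `p_l(x) = Σ_{i=0}^{l} (-1)^i binom(l,i)² x^{l-i}(1-x)^i`
(a Legendre polynomial up to a change of variables), one has `|p_l(x)| ≤ 1` on `[0,1]`,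
`p_l(1) = 1`, `p_l(0) = (-1)^l`, and `|p_l(x)| < 1` on `(0,1)`. -/
theorem stmt_7 (l : ℕ) (hl : 1 ≤ l) :
    letI pl : ℝ → ℝ := fun x =>
      ∑ i ∈ Finset.range (l + 1),
        (-1 : ℝ) ^ i * (l.choose i : ℝ) ^ 2 * x ^ (l - i) * (1 - x) ^ i
    (∀ x ∈ Set.Icc (0 : ℝ) 1, |pl x| ≤ 1) ∧
    pl 1 = 1 ∧
    pl 0 = (-1 : ℝ) ^ l ∧
    (∀ x ∈ Set.Ioo (0 : ℝ) 1, |pl x| < 1) := by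
  have h1 : (∑ i ∈ Finset.range (l + 1),
      (-1 : ℝ) ^ i * (l.choose i : ℝ) ^ 2 * (1:ℝ) ^ (l - i) * (1 - 1) ^ i) = 1 := by
    rw [Finset.sum_eq_single 0 (fun i hi hne => by
        rw [sub_self, zero_pow hne, mul_zero])
      (fun h => absurd (Finset.mem_range.mpr (by omega)) h)]
    simp
  have h0 : (∑ i ∈ Finset.range (l + 1),
      (-1 : ℝ) ^ i * (l.choose i : ℝ) ^ 2 * (0:ℝ) ^ (l - i) * (1 - 0) ^ i) = (-1:ℝ)^l := by
    rw [Finset.sum_eq_single l (fun i hi hne => by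
        have hne' : l - i ≠ 0 := by
          have := Finset.mem_range.mp hi; omega
        rw [zero_pow hne', mul_zero, zero_mul])
      (fun h => absurd (Finset.mem_range.mpr (by omega)) h)]
    simp
  have hlt : ∀ x ∈ Set.Ioo (0 : ℝ) 1,
      |∑ i ∈ Finset.range (l + 1),
        (-1 : ℝ) ^ i * (l.choose i : ℝ) ^ 2 * x ^ (l - i) * (1 - x) ^ i| < 1 := fun x hx =>
    pl_lt l hl x hx.1 hx.2
  refine ⟨?_, h1, h0, hlt⟩
  intro x hx
  show |∑ i ∈ Finset.range (l + 1),
      (-1 : ℝ) ^ i * (l.choose i : ℝ) ^ 2 * x ^ (l - i) * (1 - x) ^ i| ≤ 1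
  rcases eq_or_lt_of_le hx.1 with h | hx0
  · rw [← h, h0, abs_pow, abs_neg, abs_one, one_pow]
  rcases eq_or_lt_of_le hx.2 with h | hx1
  · rw [h, h1]
    norm_num
  · exact (hlt x ⟨hx0, hx1⟩).le
end

section
/- Let m > 0 be even, l = m/2, and D = {z,w} ∈ SU(2). The projection coefficient ⟨D.ψ_{l,m}, ψ_{l,m}⟩ has absolute value 1 if and only if D lies in the normalizer of the diagonal torus of SU(2), i.e. if and only if z = 0 or w = 0; otherwise |⟨D.ψ_{l,m}, ψ_{l,m}⟩| < 1. -/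
set_option maxHeartbeats 1000000

open MvPolynomial Finset Real intervalIntegral



lemma lin_pow (i : Fin 2) (c : ℂ) (a : ℕ) :
    (MvPolynomial.C c * MvPolynomial.X i : MvPolynomial (Fin 2) ℂ) ^ a
      = monomial (Finsupp.single i a) (c ^ a) := by
  rw [mul_pow, ← C_pow, X_pow_eq_monomial, C_mul_monomial, mul_one]

lemma factor_expand (c d : ℂ) (l : ℕ) :
    ((MvPolynomial.C c * MvPolynomial.X 0
        + MvPolynomial.C d * MvPolynomial.X 1 : MvPolynomial (Fin 2) ℂ)) ^ l
      = ∑ a ∈ Finset.range (l+1),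
          monomial (Finsupp.single (0 : Fin 2) a + Finsupp.single (1 : Fin 2) (l - a))
            ((l.choose a : ℂ) * c ^ a * d ^ (l - a)) := by
  rw [add_pow]
  refine Finset.sum_congr rfl fun a _ => ?_
  rw [lin_pow, lin_pow, monomial_mul]
  rw [show ((l.choose a : MvPolynomial (Fin 2) ℂ)) = MvPolynomial.C (l.choose a : ℂ) by
    simp]
  rw [mul_comm _ (MvPolynomial.C _), C_mul_monomial]
  ring_nf

lemma fs_iff (l a b : ℕ) (ha : a ≤ l) (hb : b ≤ l) :
    (Finsupp.single (0:Fin 2) a + Finsupp.single (1:Fin 2) (l-a))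
      + (Finsupp.single (0:Fin 2) b + Finsupp.single (1:Fin 2) (l-b))
      = Finsupp.single (0:Fin 2) l + Finsupp.single (1:Fin 2) l ↔ b = l - a := by
  constructor
  · intro hEq
    have h0 := DFunLike.congr_fun hEq 0
    simp [Finsupp.single_apply] at h0
    omega
  · intro hb'
    subst hb'
    ext i
    fin_cases i <;> simp [Finsupp.single_apply] <;> omega

lemma coeff_prod_pow (l : ℕ) (z w : ℂ) :
    MvPolynomial.coeff (Finsupp.single (0 : Fin 2) l + Finsupp.single (1 : Fin 2) l)
      ((MvPolynomial.C ((starRingEnd ℂ) z) * MvPolynomial.X 0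
          + MvPolynomial.C ((starRingEnd ℂ) w) * MvPolynomial.X 1) ^ l *
        (MvPolynomial.C (-w) * MvPolynomial.X 0 + MvPolynomial.C z * MvPolynomial.X 1) ^ l)
    = ∑ a ∈ Finset.range (l+1), (l.choose a : ℂ)^2 * ((starRingEnd ℂ) z * z)^a *
        ((starRingEnd ℂ) w * (-w))^(l-a) := by
  rw [factor_expand, factor_expand, Finset.sum_mul_sum]
  rw [MvPolynomial.coeff_sum]
  rw [Finset.sum_congr rfl (fun a ha => MvPolynomial.coeff_sum _ _ _)]
  have key : ∀ a ∈ Finset.range (l+1), ∀ b ∈ Finset.range (l+1),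
      MvPolynomial.coeff (Finsupp.single (0 : Fin 2) l + Finsupp.single (1 : Fin 2) l)
        (monomial (Finsupp.single (0 : Fin 2) a + Finsupp.single (1 : Fin 2) (l - a))
            ((l.choose a : ℂ) * ((starRingEnd ℂ) z) ^ a * ((starRingEnd ℂ) w) ^ (l - a))
          * monomial (Finsupp.single (0 : Fin 2) b + Finsupp.single (1 : Fin 2) (l - b))
            ((l.choose b : ℂ) * (-w) ^ b * z ^ (l - b)))
      = if b = l - a then
          ((l.choose a : ℂ) * ((starRingEnd ℂ) z) ^ a * ((starRingEnd ℂ) w) ^ (l - a))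
            * ((l.choose (l-a) : ℂ) * (-w) ^ (l-a) * z ^ (l - (l-a))) else 0 := by
    intro a ha b hb
    rw [monomial_mul, MvPolynomial.coeff_monomial]
    rw [Finset.mem_range] at ha hb
    by_cases hba : b = l - a
    · subst hba
      rw [if_pos ((fs_iff l a (l-a) (by omega) (by omega)).mpr rfl), if_pos rfl]
    · rw [if_neg (fun hc => hba ((fs_iff l a b (by omega) (by omega)).mp hc)), if_neg hba]
  rw [Finset.sum_congr rfl (fun a ha => Finset.sum_congr rfl (fun b hb => key a ha b hb))]
  refine Finset.sum_congr rfl fun a ha => ?_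
  rw [Finset.sum_ite_eq' (Finset.range (l+1)) (l-a)]
  rw [Finset.mem_range] at ha
  rw [if_pos (Finset.mem_range.mpr (by omega))]
  rw [Nat.choose_symm (by omega : a ≤ l), show l - (l - a) = a by omega]
  ring


lemma normSq_prod (x y r c s : ℝ) (hx : 0 < x) (hxy : x + y = 1) (hr2 : r^2 = y/x)
    (hcs : s^2 + c^2 = 1) :
    (x^2*r^2 + y^2 - 2*x*y*r*c) * (1 + r^2 + 2*r*c) = r^2 - 4*x*y*r^2*c^2 := by
  have hy' : y = x*r^2 := by
    field_simp at hr2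
    linarith [hr2]
  have hx' : x*(1+r^2) = 1 := by
    rw [hy'] at hxy
    linarith
  subst hy'
  linear_combination (r^2*(x*(1+r^2)+1)) * hx'

lemma normG (l : ℕ) (x y r : ℝ) (hx : 0 < x) (hy : 0 < y) (hxy : x + y = 1)
    (hr : 0 ≤ r) (hr2 : r^2 = y/x) (θ : ℝ) :
    ‖Complex.exp (-(l:ℂ) * Complex.I * θ) *
      ((x * (r * Complex.exp (Complex.I * θ)) - y) * (1 + r * Complex.exp (Complex.I * θ)))^l‖
    = r^l * (Real.sqrt (1 - 4*x*y*(Real.cos θ)^2))^l := by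
  rw [norm_mul, norm_pow]
  have h0 : ‖Complex.exp (-(l:ℂ) * Complex.I * θ)‖ = 1 := by
    rw [Complex.norm_exp]
    simp
  rw [h0, one_mul]
  have hA : ‖(x * (r * Complex.exp (Complex.I * θ)) - y) *
      (1 + r * Complex.exp (Complex.I * θ))‖ = r * Real.sqrt (1 - 4*x*y*(Real.cos θ)^2) := by
    rw [Complex.norm_def]
    have hns : Complex.normSq ((x * (r * Complex.exp (Complex.I * θ)) - y) *
        (1 + r * Complex.exp (Complex.I * θ))) = r^2 * (1 - 4*x*y*(Real.cos θ)^2) := by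
      rw [map_mul]
      have e : Complex.I * (θ:ℂ) = (θ:ℂ) * Complex.I := mul_comm _ _
      rw [e, Complex.exp_mul_I, ← Complex.ofReal_cos, ← Complex.ofReal_sin]
      have h1 : Complex.normSq ((x:ℂ) * ((r:ℂ) * ((Real.cos θ : ℂ) + (Real.sin θ : ℂ) * Complex.I)) - (y:ℂ))
          = x^2*r^2 + y^2 - 2*x*y*r*Real.cos θ := by
        simp only [Complex.normSq_apply, Complex.mul_re, Complex.mul_im, Complex.sub_re,
          Complex.sub_im, Complex.add_re, Complex.add_im, Complex.ofReal_re, Complex.ofReal_im,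
          Complex.I_re, Complex.I_im]
        ring_nf
        linear_combination (x^2*r^2) * (sin_sq_add_cos_sq θ)
      have h2 : Complex.normSq (1 + (r:ℂ) * ((Real.cos θ : ℂ) + (Real.sin θ : ℂ) * Complex.I))
          = 1 + r^2 + 2*r*Real.cos θ := by
        simp only [Complex.normSq_apply, Complex.mul_re, Complex.mul_im, Complex.sub_re,
          Complex.sub_im, Complex.add_re, Complex.add_im, Complex.ofReal_re, Complex.ofReal_im,
          Complex.I_re, Complex.I_im, Complex.one_re, Complex.one_im]
        ring_nf
        linear_combination (r^2) * (sin_sq_add_cos_sq θ)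
      rw [h1, h2, normSq_prod x y r (Real.cos θ) (Real.sin θ) hx hxy hr2 (sin_sq_add_cos_sq θ)]
      ring
    rw [hns, Real.sqrt_mul (by positivity), Real.sqrt_sq hr]
  rw [hA, mul_pow]

noncomputable def cc (l a b : ℕ) (x y r : ℝ) : ℂ :=
  (l.choose a : ℂ) * (l.choose b : ℂ) * (x:ℂ)^a * (-(y:ℂ))^(l-a) * (r:ℂ)^(a+b)

lemma expand_G (l : ℕ) (x y r : ℝ) (θ : ℝ) :
    Complex.exp (-(l:ℂ) * Complex.I * θ) *
      ((x * (r * Complex.exp (Complex.I * θ)) - y) * (1 + r * Complex.exp (Complex.I * θ)))^l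
    = ∑ a ∈ Finset.range (l+1), ∑ b ∈ Finset.range (l+1),
        cc l a b x y r * Complex.exp ((((a+b:ℕ):ℂ) - l) * Complex.I * θ) := by
  have h1 : ((x:ℂ) * (r * Complex.exp (Complex.I * θ)) - y)
      = (x:ℂ) * (r * Complex.exp (Complex.I * θ)) + (-(y:ℂ)) := by ring
  have h2 : (1 + (r:ℂ) * Complex.exp (Complex.I * θ))
      = ((r:ℂ) * Complex.exp (Complex.I * θ)) + 1 := by ring
  rw [h1, h2, mul_pow, add_pow, add_pow, Finset.sum_mul_sum, Finset.mul_sum]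
  refine Finset.sum_congr rfl fun a ha => ?_
  rw [Finset.mul_sum]
  refine Finset.sum_congr rfl fun b hb => ?_
  rw [Finset.mem_range] at ha hb
  have e1 : Complex.exp (Complex.I * θ) ^ a = Complex.exp ((a:ℂ) * (Complex.I * θ)) :=
    (Complex.exp_nat_mul _ a).symm
  have e2 : Complex.exp (Complex.I * θ) ^ b = Complex.exp ((b:ℂ) * (Complex.I * θ)) :=
    (Complex.exp_nat_mul _ b).symm
  have e3 : Complex.exp (-(l:ℂ) * Complex.I * θ) * (Complex.exp ((a:ℂ) * (Complex.I * θ))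
        * Complex.exp ((b:ℂ) * (Complex.I * θ)))
      = Complex.exp ((((a+b:ℕ):ℂ) - l) * Complex.I * θ) := by
    rw [← Complex.exp_add, ← Complex.exp_add]
    congr 1
    push_cast
    ring
  rw [cc]
  simp only [mul_pow]
  rw [e1, e2, ← e3]
  push_cast
  ring

lemma int_exp (n : ℤ) :
    (∫ θ in (0:ℝ)..(2*Real.pi), Complex.exp (((n:ℂ)) * Complex.I * θ))
      = if n = 0 then (2*Real.pi : ℂ) else 0 := by
  by_cases hn : n = 0
  · simp [hn]
  · rw [if_neg hn]
    have hc : ((n:ℂ)) * Complex.I ≠ 0 := by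
      simp [Complex.I_ne_zero, hn]
    have : ∀ θ:ℝ, Complex.exp ((n:ℂ) * Complex.I * θ) = Complex.exp ((n:ℂ) * Complex.I * θ) := fun _ => rfl
    rw [show (fun θ:ℝ => Complex.exp ((n:ℂ) * Complex.I * θ)) = fun θ:ℝ => Complex.exp (((n:ℂ)*Complex.I) * θ) from rfl]
    rw [integral_exp_mul_complex hc]
    have h1 : ((n:ℂ) * Complex.I) * ((2*Real.pi:ℝ):ℂ) = (n:ℂ) * (2*(Real.pi:ℂ)*Complex.I) := by
      push_cast; ring
    rw [h1, Complex.exp_int_mul_two_pi_mul_I]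
    simp

lemma claim1 (l : ℕ) (x y r : ℝ) :
    (∫ θ in (0:ℝ)..(2*Real.pi), Complex.exp (-(l:ℂ) * Complex.I * θ) *
      ((x * (r * Complex.exp (Complex.I * θ)) - y) * (1 + r * Complex.exp (Complex.I * θ)))^l)
    = 2*Real.pi * (r:ℂ)^l *
        ∑ a ∈ Finset.range (l+1), (l.choose a:ℂ)^2 * (x:ℂ)^a * (-(y:ℂ))^(l-a) := by
  have hcont : ∀ a b : ℕ, IntervalIntegrable
      (fun θ:ℝ => cc l a b x y r * Complex.exp ((((a+b:ℕ):ℂ) - l) * Complex.I * θ))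
      MeasureTheory.volume 0 (2*Real.pi) := by
    intro a b
    apply Continuous.intervalIntegrable
    fun_prop
  simp only [expand_G]
  rw [intervalIntegral.integral_finset_sum
    (f := fun (a : ℕ) (θ : ℝ) => ∑ b ∈ Finset.range (l+1),
      cc l a b x y r * Complex.exp ((((a+b:ℕ):ℂ) - l) * Complex.I * θ))
    (fun a _ => by
      apply Continuous.intervalIntegrable
      exact continuous_finset_sum _ fun b _ => by fun_prop)]
  rw [Finset.sum_congr rfl fun a _ => intervalIntegral.integral_finset_sum
    (fun b _ => hcont a b)]
  have hterm : ∀ a b : ℕ,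
      (∫ θ in (0:ℝ)..(2*Real.pi),
          cc l a b x y r * Complex.exp ((((a+b:ℕ):ℂ) - l) * Complex.I * θ))
      = cc l a b x y r * (if ((a:ℤ)+b-l) = 0 then (2*Real.pi:ℂ) else 0) := by
    intro a b
    rw [intervalIntegral.integral_const_mul]
    congr 1
    have harg : (fun θ:ℝ => Complex.exp ((((a+b:ℕ):ℂ) - l) * Complex.I * θ))
        = fun θ:ℝ => Complex.exp (((((a:ℤ)+b-l : ℤ):ℂ)) * Complex.I * θ) := by
      funext θ
      congr 1
      push_cast
      ring
    rw [harg]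
    exact int_exp _
  rw [Finset.sum_congr rfl fun a _ => Finset.sum_congr rfl fun b _ => hterm a b]
  rw [Finset.mul_sum]
  refine Finset.sum_congr rfl fun a ha => ?_
  rw [Finset.mem_range] at ha
  have hcond : ∀ b : ℕ, ((a:ℤ)+b-l = 0) = (b = l - a) := by
    intro b
    apply propext
    omega
  simp only [hcond, mul_ite, mul_zero]
  rw [Finset.sum_ite_eq' (Finset.range (l+1)) (l-a)
      (fun b => cc l a b x y r * (2*Real.pi:ℂ)),
    if_pos (Finset.mem_range.mpr (by omega : l - a < l + 1))]
  rw [cc, Nat.choose_symm (by omega : a ≤ l), show a + (l - a) = l by omega]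
  ring

lemma key_ineq (l : ℕ) (hl : 1 ≤ l) (x y : ℝ) (hx : 0 < x) (hy : 0 < y) (hxy : x + y = 1) :
    |∑ a ∈ Finset.range (l+1), (l.choose a:ℝ)^2 * x^a * (-y)^(l-a)| ≤ 1 - x*y := by
  set r := Real.sqrt (y/x) with hrdef
  have hrpos : 0 < r := Real.sqrt_pos.mpr (by positivity)
  have hr2 : r^2 = y/x := Real.sq_sqrt (by positivity)
  set S : ℝ := ∑ a ∈ Finset.range (l+1), (l.choose a:ℝ)^2 * x^a * (-y)^(l-a) with hS
  have hxy4 : x*y ≤ 1/4 := by nlinarith [sq_nonneg (x-y)]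
  have hcast : (∑ a ∈ Finset.range (l+1), (l.choose a:ℂ)^2 * (x:ℂ)^a * (-(y:ℂ))^(l-a))
      = (S:ℂ) := by
    rw [hS]
    push_cast
    rfl
  have h1 := claim1 l x y r
  rw [hcast] at h1
  have habs : ‖2*Real.pi * (r:ℂ)^l * (S:ℂ)‖ = 2*Real.pi*(r^l*|S|) := by
    have e : (2*(Real.pi:ℂ) * (r:ℂ)^l * (S:ℂ)) = (((2*Real.pi*r^l*S : ℝ)):ℂ) := by
      push_cast; ring
    rw [e, Complex.norm_real, Real.norm_eq_abs, abs_mul,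
      abs_of_pos (by positivity : (0:ℝ) < 2*Real.pi*r^l)]
    ring
  -- pointwise bound
  have hb : ∀ θ ∈ Set.Icc (0:ℝ) (2*Real.pi),
      ‖Complex.exp (-(l:ℂ) * Complex.I * θ) *
        ((x * (r * Complex.exp (Complex.I * θ)) - y) *
          (1 + r * Complex.exp (Complex.I * θ)))^l‖
      ≤ r^l * (1 - 2*x*y*(Real.cos θ)^2) := by
    intro θ _
    rw [normG l x y r hx hy hxy hrpos.le hr2 θ]
    have hc2 : (Real.cos θ)^2 ≤ 1 := Real.cos_sq_le_one θ
    have hge : (0:ℝ) ≤ 1 - 2*x*y*(Real.cos θ)^2 := by nlinarith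
    have hs1 : Real.sqrt (1 - 4*x*y*(Real.cos θ)^2) ≤ 1 - 2*x*y*(Real.cos θ)^2 := by
      have : (1 - 4*x*y*(Real.cos θ)^2) ≤ (1 - 2*x*y*(Real.cos θ)^2)^2 := by
        nlinarith [sq_nonneg (x*y*(Real.cos θ)^2)]
      calc Real.sqrt (1 - 4*x*y*(Real.cos θ)^2)
          ≤ Real.sqrt ((1 - 2*x*y*(Real.cos θ)^2)^2) := Real.sqrt_le_sqrt this
        _ = 1 - 2*x*y*(Real.cos θ)^2 := Real.sqrt_sq hge
    have hle1 : Real.sqrt (1 - 4*x*y*(Real.cos θ)^2) ≤ 1 := by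
      calc Real.sqrt (1 - 4*x*y*(Real.cos θ)^2) ≤ Real.sqrt 1 :=
            Real.sqrt_le_sqrt (by nlinarith [mul_nonneg (mul_nonneg hx.le hy.le) (sq_nonneg (Real.cos θ))])
        _ = 1 := Real.sqrt_one
    have hpl : (Real.sqrt (1 - 4*x*y*(Real.cos θ)^2))^l
        ≤ Real.sqrt (1 - 4*x*y*(Real.cos θ)^2) := by
      calc (Real.sqrt (1 - 4*x*y*(Real.cos θ)^2))^l
          ≤ (Real.sqrt (1 - 4*x*y*(Real.cos θ)^2))^1 :=
            pow_le_pow_of_le_one (Real.sqrt_nonneg _) hle1 hl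
        _ = _ := pow_one _
    have : (Real.sqrt (1 - 4*x*y*(Real.cos θ)^2))^l ≤ 1 - 2*x*y*(Real.cos θ)^2 :=
      hpl.trans hs1
    exact mul_le_mul_of_nonneg_left this (by positivity)
  have hGc : Continuous fun θ:ℝ => Complex.exp (-(l:ℂ) * Complex.I * θ) *
      ((x * (r * Complex.exp (Complex.I * θ)) - y) *
        (1 + r * Complex.exp (Complex.I * θ)))^l := by fun_prop
  have h2pi : (0:ℝ) ≤ 2*Real.pi := by positivity
  have hIb : (∫ θ in (0:ℝ)..(2*Real.pi), ‖Complex.exp (-(l:ℂ) * Complex.I * θ) *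
      ((x * (r * Complex.exp (Complex.I * θ)) - y) *
        (1 + r * Complex.exp (Complex.I * θ)))^l‖)
      ≤ ∫ θ in (0:ℝ)..(2*Real.pi), r^l * (1 - 2*x*y*(Real.cos θ)^2) := by
    apply intervalIntegral.integral_mono_on h2pi
    · exact hGc.norm.intervalIntegrable _ _
    · exact (by fun_prop : Continuous fun θ:ℝ => r^l * (1 - 2*x*y*(Real.cos θ)^2)).intervalIntegrable _ _
    · exact hb
  have hIc : (∫ θ in (0:ℝ)..(2*Real.pi), r^l * (1 - 2*x*y*(Real.cos θ)^2))
      = r^l * (2*Real.pi - 2*x*y*Real.pi) := by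
    rw [intervalIntegral.integral_const_mul]
    congr 1
    rw [intervalIntegral.integral_sub intervalIntegrable_const
      ((by fun_prop : Continuous fun θ:ℝ => 2*x*y*(Real.cos θ)^2).intervalIntegrable _ _)]
    rw [intervalIntegral.integral_const, intervalIntegral.integral_const_mul, integral_cos_sq]
    rw [Real.sin_two_pi, Real.cos_two_pi, Real.sin_zero, Real.cos_zero]
    simp

  have hle : 2*Real.pi*(r^l*|S|) ≤ r^l * (2*Real.pi - 2*x*y*Real.pi) := by
    rw [← habs, ← h1]
    refine le_trans ?_ (hIb.trans hIc.le)
    exact intervalIntegral.norm_integral_le_integral_norm h2pi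
  have hfin : 2*Real.pi*r^l*|S| ≤ 2*Real.pi*r^l*(1 - x*y) := by nlinarith [Real.pi_pos]
  have hpos : (0:ℝ) < 2*Real.pi*r^l := by positivity
  exact le_of_mul_le_mul_left hfin hpos


lemma abs_cpi_eq (l : ℕ) (z w : ℂ) :
    ‖cpi (2 * l) l l z w‖
      = |∑ a ∈ Finset.range (l+1), (l.choose a:ℝ)^2 * (‖z‖^2)^a
          * (-(‖w‖^2))^(l-a)| := by
  have hml : 2 * l - l = l := by omega
  have hdvd : l.factorial * l.factorial ∣ (2*l + 1).factorial := by
    have h1 : l.factorial * l.factorial ∣ (l + l).factorial :=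
      Nat.factorial_mul_factorial_dvd_factorial_add l l
    exact h1.trans (Nat.factorial_dvd_factorial (by omega))
  have hNpos : 0 < (2*l + 1).factorial / (l.factorial * l.factorial) :=
    Nat.div_pos (Nat.le_of_dvd (Nat.factorial_pos _) hdvd)
      (Nat.mul_pos (Nat.factorial_pos l) (Nat.factorial_pos l))
  have hsqrt : Real.sqrt (((2*l + 1).factorial / (l.factorial * l.factorial) : ℕ)) ≠ 0 := by
    refine ne_of_gt (Real.sqrt_pos.mpr ?_)
    exact_mod_cast hNpos
  rw [cpi, hml, div_self hsqrt, coeff_prod_pow l z w]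
  have hz : (starRingEnd ℂ) z * z = ((‖z‖^2 : ℝ):ℂ) := by
    rw [mul_comm, Complex.mul_conj, Complex.normSq_eq_norm_sq]
  have hw : (starRingEnd ℂ) w * (-w) = -((‖w‖^2 : ℝ):ℂ) := by
    rw [mul_neg, mul_comm, Complex.mul_conj, Complex.normSq_eq_norm_sq]
  rw [Finset.sum_congr rfl fun a _ => by rw [hz, hw]]
  have hcast : (∑ a ∈ Finset.range (l+1), (l.choose a:ℂ)^2 * ((‖z‖^2 : ℝ):ℂ)^a
        * (-((‖w‖^2 : ℝ):ℂ))^(l-a))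
      = ((∑ a ∈ Finset.range (l+1), (l.choose a:ℝ)^2 * (‖z‖^2)^a
          * (-(‖w‖^2))^(l-a) : ℝ) : ℂ) := by
    push_cast
    rfl
  rw [hcast]
  rw [Complex.ofReal_one, one_mul, Complex.norm_real, Real.norm_eq_abs]

/-- for `m = 2l > 0` even, the projection coefficient
`⟨D.ψ_{l,m}, ψ_{l,m}⟩` of `D = {z,w} ∈ SU(2)` has absolute value `1` iff `D` is in the
normalizer of the diagonal torus, i.e. iff `z = 0` or `w = 0`; otherwise it is `< 1`. -/
theorem stmt_8 (l : ℕ) (hl : 1 ≤ l) (z w : ℂ)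
    (h : ‖z‖ ^ 2 + ‖w‖ ^ 2 = 1) :
    (‖cpi (2 * l) l l z w‖ = 1 ↔ (z = 0 ∨ w = 0)) ∧
    (z ≠ 0 → w ≠ 0 → ‖cpi (2 * l) l l z w‖ < 1) := by
  rw [abs_cpi_eq l z w]
  have hstrict : z ≠ 0 → w ≠ 0 →
      |∑ a ∈ Finset.range (l+1), (l.choose a:ℝ)^2 * (‖z‖^2)^a
        * (-(‖w‖^2))^(l-a)| < 1 := by
    intro hz hw
    have hx : 0 < ‖z‖^2 := pow_pos (norm_pos_iff.mpr hz) 2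
    have hy : 0 < ‖w‖^2 := pow_pos (norm_pos_iff.mpr hw) 2
    have := key_ineq l hl (‖z‖^2) (‖w‖^2) hx hy h
    nlinarith
  have hend : (z = 0 ∨ w = 0) →
      |∑ a ∈ Finset.range (l+1), (l.choose a:ℝ)^2 * (‖z‖^2)^a
        * (-(‖w‖^2))^(l-a)| = 1 := by
    rintro (rfl | rfl)
    · have hx0 : ‖(0:ℂ)‖^2 = (0:ℝ) := by simp
      have hy1 : ‖w‖^2 = (1:ℝ) := by
        rw [hx0] at h
        linarith
      rw [Finset.sum_eq_single_of_mem 0 (Finset.mem_range.mpr (by omega))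
        (fun b _ hb => by rw [hx0, zero_pow hb]; ring)]
      rw [hx0, hy1]
      simp
    · have hy0 : ‖(0:ℂ)‖^2 = (0:ℝ) := by simp
      have hx1 : ‖z‖^2 = (1:ℝ) := by
        rw [hy0] at h
        linarith
      rw [Finset.sum_eq_single_of_mem l (Finset.mem_range.mpr (by omega))
        (fun b hb hbne => by
          rw [hy0, neg_zero, zero_pow (by rw [Finset.mem_range] at hb; omega : l - b ≠ 0)]
          ring)]
      rw [hy0, hx1]
      simp
  refine ⟨⟨fun h1 => ?_, hend⟩, fun hz hw => hstrict hz hw⟩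
  by_contra hcon
  push_neg at hcon
  exact absurd h1 (ne_of_lt (hstrict hcon.1 hcon.2))
end
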